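/- Let f : ℝⁿ → ℝ be differentiable and superlinearly coercive, i.e. f(α)/|α| → +∞ as |α| → ∞. Then f is strictly convex if and only if for every p ∈ ℝⁿ the supremum sup_{α ∈ ℝⁿ} (p·α − f(α)) is attained at exactly one point α ∈ ℝⁿ. -/

import Mathlib

open Set MeasureTheory Filter
open scoped RealInnerProductSpace ENNReal Topology

noncomputable section

namespace MFG

/-- Euclidean space `ℝⁿ`. -/
abbrev Euc (n : ℕ) := EuclideanSpace ℝ (Fin n)

variable {n : ℕ}

/-- The pushforward `(I,α)#m` of a measure `m` under `x ↦ (x, α x)`. -/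
def pushfwd (m : Measure (Euc n)) (α : Euc n → Euc n) : Measure (Euc n × Euc n) :=
  Measure.map (fun x => (x, α x)) m

/-- `Λ_q(μ) = (∫ |α|^q dμ(x,α))^{1/q}`. -/
def LambdaQ (q : ℝ) (μ : Measure (Euc n × Euc n)) : ℝ :=
  (∫ z, ‖z.2‖ ^ q ∂μ) ^ (1 / q)

/-- `Λ_∞(μ)`: the smallest `R ≥ 0` such that `μ` is supported in `{|α| ≤ R}`. -/
def LambdaInf (μ : Measure (Euc n × Euc n)) : ℝ :=
  sInf {R : ℝ | 0 ≤ R ∧ μ {z : Euc n × Euc n | R < ‖z.2‖} = 0}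

/-- `L^q(ρ)` norm of a vector field. -/
def LqNormV (q : ℝ) (ρ : Measure (Euc n)) (f : Euc n → Euc n) : ℝ :=
  (∫ x, ‖f x‖ ^ q ∂ρ) ^ (1 / q)

/-- `L^q(ρ)` norm of a scalar function. -/
def LqNormR (q : ℝ) (ρ : Measure (Euc n)) (f : Euc n → ℝ) : ℝ :=
  (∫ x, |f x| ^ q ∂ρ) ^ (1 / q)

/-- The bounded-Lipschitz metric `d*` on measures on `cl(Ω) × ℝⁿ`. -/
def dstar (μ ν : Measure (Euc n × Euc n)) : ℝ :=
  sSup {r : ℝ | ∃ φ : Euc n × Euc n → ℝ, LipschitzWith 1 φ ∧ (∀ z, |φ z| ≤ 1) ∧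
    r = (∫ z, φ z ∂μ) - ∫ z, φ z ∂ν}

/-- The bounded-Lipschitz metric `d*` on measures on `cl(Ω)`. -/
def dstarX (μ ν : Measure (Euc n)) : ℝ :=
  sSup {r : ℝ | ∃ φ : Euc n → ℝ, LipschitzWith 1 φ ∧ (∀ z, |φ z| ≤ 1) ∧
    r = (∫ z, φ z ∂μ) - ∫ z, φ z ∂ν}

/-- The measure `f dx` on `Ω` with Lebesgue density `f`. -/
def densMeas (Ω : Set (Euc n)) (f : Euc n → ℝ) : Measure (Euc n) :=
  (volume.restrict Ω).withDensity fun x => ENNReal.ofReal (f x)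

/-- `∂_t u`. -/
def pderivT (u : ℝ → Euc n → ℝ) (t : ℝ) (x : Euc n) : ℝ :=
  deriv (fun s => u s x) t

/-- `D_x u`, the spatial gradient. -/
def spaceGrad (u : ℝ → Euc n → ℝ) (t : ℝ) (x : Euc n) : Euc n :=
  gradient (u t) x

/-- The Laplacian of a function on `ℝⁿ`. -/
def lapl (f : Euc n → ℝ) (x : Euc n) : ℝ :=
  ∑ i : Fin n, fderiv ℝ (fun y => fderiv ℝ f y (EuclideanSpace.single i 1)) x
    (EuclideanSpace.single i 1)

/-- The (spatial) divergence of a vector field on `ℝⁿ`. -/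
def divg (F : Euc n → Euc n) (x : Euc n) : ℝ :=
  ∑ i : Fin n, fderiv ℝ (fun y => F y i) x (EuclideanSpace.single i 1)

/-- `u ∈ C^{1,2}(Q)`: continuous on `Q = [0,T] × cl(Ω)`, once differentiable in time,
twice in space. -/
def C12 (T : ℝ) (Ω : Set (Euc n)) (u : ℝ → Euc n → ℝ) : Prop :=
  ContinuousOn (fun z : ℝ × Euc n => u z.1 z.2) (Icc 0 T ×ˢ closure Ω) ∧
  ∀ t ∈ Icc (0:ℝ) T, ∀ x ∈ closure Ω,
    DifferentiableAt ℝ (fun s => u s x) t ∧ ContDiffAt ℝ 2 (u t) x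

/-- `sup_Q v`. -/
def supQ (T : ℝ) (Ω : Set (Euc n)) (v : ℝ → Euc n → ℝ) : ℝ :=
  sSup ((fun z : ℝ × Euc n => v z.1 z.2) '' (Icc 0 T ×ˢ closure Ω))

/-- `sup_{cl Ω} v`. -/
def supX (Ω : Set (Euc n)) (v : Euc n → ℝ) : ℝ :=
  sSup (v '' closure Ω)

/-- `N` is the outward unit normal vector field on `∂Ω`. -/
def OutwardNormal (Ω : Set (Euc n)) (N : Euc n → Euc n) : Prop :=
  ∀ x ∈ frontier Ω, ‖N x‖ = 1 ∧
    ∀ᶠ s : ℝ in 𝓝[>] (0:ℝ), x + s • N x ∉ closure Ω ∧ x - s • N x ∈ Ω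

/-- `Θ_θ(μ)`: pushforward of `μ` under `(x,α) ↦ (x, α/θ)`. -/
def Theta (θ : ℝ) (μ : Measure (Euc n × Euc n)) : Measure (Euc n × Euc n) :=
  Measure.map (fun z : Euc n × Euc n => (z.1, θ⁻¹ • z.2)) μ

/-- `L^θ(t,x,α,μ) = θ L(t,x,α/θ,Θ_θ(μ))`. -/
def Ltheta (L : ℝ → Euc n → Euc n → Measure (Euc n × Euc n) → ℝ)
    (θ t : ℝ) (x a : Euc n) (μ : Measure (Euc n × Euc n)) : ℝ :=
  θ * L t x (θ⁻¹ • a) (Theta θ μ)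

/-- `H^θ`, the Legendre transform of `L^θ` in the velocity variable. -/
def Htheta (L : ℝ → Euc n → Euc n → Measure (Euc n × Euc n) → ℝ)
    (θ t : ℝ) (x p : Euc n) (μ : Measure (Euc n × Euc n)) : ℝ :=
  ⨆ a : Euc n, (⟪p, a⟫ - Ltheta L θ t x a μ)

/-- Sequential continuity on `[0,T] × cl(Ω) × ℝⁿ × 𝔐_{∞,R}(cl(Ω)×ℝⁿ)` (every `R`),
the measure argument carrying the metric `d*` (scalar-valued version). -/
def MContR (T : ℝ) (Ω : Set (Euc n))
    (F : ℝ → Euc n → Euc n → Measure (Euc n × Euc n) → ℝ) : Prop :=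
  ∀ R > (0:ℝ), ∀ (tk : ℕ → ℝ) (xk pk : ℕ → Euc n)
    (μk : ℕ → Measure (Euc n × Euc n)) (t : ℝ) (x p : Euc n)
    (μ : Measure (Euc n × Euc n)),
    (∀ k, tk k ∈ Icc 0 T) → t ∈ Icc 0 T →
    (∀ k, xk k ∈ closure Ω) → x ∈ closure Ω →
    (∀ k, μk k Set.univ ≤ 1 ∧ μk k {z : Euc n × Euc n | R < ‖z.2‖} = 0) →
    μ Set.univ ≤ 1 → μ {z : Euc n × Euc n | R < ‖z.2‖} = 0 →
    Tendsto tk atTop (𝓝 t) → Tendsto xk atTop (𝓝 x) → Tendsto pk atTop (𝓝 p) →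
    Tendsto (fun k => dstar (μk k) μ) atTop (𝓝 0) →
    Tendsto (fun k => F (tk k) (xk k) (pk k) (μk k)) atTop (𝓝 (F t x p μ))

/-- Sequential continuity (vector-valued version). -/
def MContV (T : ℝ) (Ω : Set (Euc n))
    (F : ℝ → Euc n → Euc n → Measure (Euc n × Euc n) → Euc n) : Prop :=
  ∀ R > (0:ℝ), ∀ (tk : ℕ → ℝ) (xk pk : ℕ → Euc n)
    (μk : ℕ → Measure (Euc n × Euc n)) (t : ℝ) (x p : Euc n)
    (μ : Measure (Euc n × Euc n)),
    (∀ k, tk k ∈ Icc 0 T) → t ∈ Icc 0 T →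
    (∀ k, xk k ∈ closure Ω) → x ∈ closure Ω →
    (∀ k, μk k Set.univ ≤ 1 ∧ μk k {z : Euc n × Euc n | R < ‖z.2‖} = 0) →
    μ Set.univ ≤ 1 → μ {z : Euc n × Euc n | R < ‖z.2‖} = 0 →
    Tendsto tk atTop (𝓝 t) → Tendsto xk atTop (𝓝 x) → Tendsto pk atTop (𝓝 p) →
    Tendsto (fun k => dstar (μk k) μ) atTop (𝓝 0) →
    Tendsto (fun k => F (tk k) (xk k) (pk k) (μk k)) atTop (𝓝 (F t x p μ))

end MFG


open MFG

section Stmt15Aux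

open Filter

variable {n : ℕ}

/-- Growth extraction from superlinear coercivity. -/
private lemma stmt15_grow {f : Euc n → ℝ}
    (hcoer : Tendsto (fun α : Euc n => f α / ‖α‖) (cocompact (Euc n)) atTop)
    (C : ℝ) :
    ∃ r : ℝ, ∀ β : Euc n, r ≤ ‖β‖ → 1 ≤ ‖β‖ ∧ C * ‖β‖ ≤ f β := by
  have h1 : ∀ᶠ β : Euc n in cocompact _, C ≤ f β / ‖β‖ := hcoer.eventually_ge_atTop C
  have h2 : ∀ᶠ β : Euc n in cocompact _, (1:ℝ) ≤ ‖β‖ :=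
    tendsto_norm_cocompact_atTop.eventually_ge_atTop 1
  obtain ⟨K, hK, hsub⟩ := Filter.mem_cocompact.mp (h1.and h2)
  obtain ⟨r, hr⟩ := hK.isBounded.subset_closedBall 0
  refine ⟨r + 1, fun β hβ => ?_⟩
  have hβK : β ∉ K := by
    intro hm
    have h := hr hm
    rw [Metric.mem_closedBall, dist_zero_right] at h
    linarith
  obtain ⟨hC, h1'⟩ := hsub hβK
  refine ⟨h1', ?_⟩
  have hpos : (0:ℝ) < ‖β‖ := by linarith
  have := (le_div_iff₀ hpos).mp hC
  linarith


private lemma stmt15_forward {f : Euc n → ℝ}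
    (hcont : Continuous f)
    (hcoer : Tendsto (fun α : Euc n => f α / ‖α‖) (cocompact (Euc n)) atTop)
    (hsc : StrictConvexOn ℝ Set.univ f) (p : Euc n) :
    ∃! α : Euc n, ∀ β : Euc n, ⟪p, β⟫ - f β ≤ ⟪p, α⟫ - f α := by
  have hco : Tendsto (fun β : Euc n => f β - ⟪p, β⟫) (cocompact (Euc n)) atTop := by
    rw [tendsto_atTop]
    intro C
    obtain ⟨r, hr⟩ := stmt15_grow hcoer (‖p‖ + max C 0)
    filter_upwards [tendsto_norm_cocompact_atTop.eventually_ge_atTop r] with β hβ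
    obtain ⟨h1, h2⟩ := hr β hβ
    have hip : ⟪p, β⟫ ≤ ‖p‖ * ‖β‖ := real_inner_le_norm p β
    nlinarith [le_max_left C 0, le_max_right C 0]
  obtain ⟨α, hα⟩ := (hcont.sub (continuous_const.inner continuous_id)).exists_forall_le hco
  have hmax : ∀ β : Euc n, ⟪p, β⟫ - f β ≤ ⟪p, α⟫ - f α := by
    intro β; have := hα β; simp only [id_eq, Pi.sub_apply] at this; linarith
  refine ⟨α, hmax, ?_⟩
  intro α' h'
  by_contra hne
  have hM := hsc.2 (Set.mem_univ α') (Set.mem_univ α) hne (by norm_num : (0:ℝ) < 1/2)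
    (by norm_num : (0:ℝ) < 1/2) (by norm_num)
  rw [smul_eq_mul, smul_eq_mul] at hM
  set m := (1/2:ℝ) • α' + (1/2:ℝ) • α with hm
  have hiv : ⟪p, m⟫ = (1/2) * ⟪p, α'⟫ + (1/2) * ⟪p, α⟫ := by
    rw [hm, inner_add_right, real_inner_smul_right, real_inner_smul_right]
  have e1 := h' α
  have e2 := hmax α'
  have e3 := hmax m
  linarith

private lemma stmt15_reverse {f : Euc n → ℝ}
    (hcont : Continuous f)
    (hcoer : Tendsto (fun α : Euc n => f α / ‖α‖) (cocompact (Euc n)) atTop)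
    (hU : ∀ p : Euc n, ∃! α : Euc n, ∀ β : Euc n, ⟪p, β⟫ - f β ≤ ⟪p, α⟫ - f α) :
    StrictConvexOn ℝ Set.univ f := by
  classical
  have hex : ∀ p : Euc n, ∃ α : Euc n, ∀ β : Euc n, ⟪p, β⟫ - f β ≤ ⟪p, α⟫ - f α :=
    fun p => (hU p).exists
  choose A hA using hex
  -- sequential continuity of the argmax map
  have seqA : ∀ (pk : ℕ → Euc n) (p : Euc n), Tendsto pk atTop (𝓝 p) →
      Tendsto (fun k => A (pk k)) atTop (𝓝 (A p)) := by
    intro pk p hpk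
    obtain ⟨P, hP⟩ := hpk.norm.bddAbove_range
    have hP' : ∀ k, ‖pk k‖ ≤ P := fun k => hP (Set.mem_range_self k)
    obtain ⟨r, hr⟩ := stmt15_grow hcoer (P + |f 0| + 1)
    set R := max r 0 with hR
    have hAb : ∀ k, A (pk k) ∈ Metric.closedBall (0 : Euc n) R := by
      intro k
      rw [Metric.mem_closedBall, dist_zero_right]
      by_contra hgt
      push_neg at hgt
      have hge : r ≤ ‖A (pk k)‖ := le_trans (le_max_left _ _) hgt.le
      obtain ⟨h1, h2⟩ := hr _ hge
      have h3 := hA (pk k) 0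
      rw [inner_zero_right] at h3
      have hip : ⟪pk k, A (pk k)⟫ ≤ ‖pk k‖ * ‖A (pk k)‖ := real_inner_le_norm _ _
      have hPA : ‖pk k‖ * ‖A (pk k)‖ ≤ P * ‖A (pk k)‖ :=
        mul_le_mul_of_nonneg_right (hP' k) (norm_nonneg _)
      nlinarith [abs_nonneg (f 0), le_abs_self (f 0)]
    apply tendsto_of_subseq_tendsto
    intro ns hns
    obtain ⟨a, _, φ, hφ, hconv⟩ :=
      (isCompact_closedBall (0 : Euc n) R).tendsto_subseq
        (x := fun k => A (pk (ns k))) (fun k => hAb (ns k))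
    have hpq : Tendsto (fun j => pk (ns (φ j))) atTop (𝓝 p) :=
      hpk.comp (hns.comp hφ.tendsto_atTop)
    have hMa : ∀ β, ⟪p, β⟫ - f β ≤ ⟪p, a⟫ - f a := by
      intro β
      have hL : Tendsto (fun j => ⟪pk (ns (φ j)), β⟫ - f β) atTop (𝓝 (⟪p, β⟫ - f β)) :=
        (hpq.inner tendsto_const_nhds).sub tendsto_const_nhds
      have hRt : Tendsto (fun j => ⟪pk (ns (φ j)), A (pk (ns (φ j)))⟫ - f (A (pk (ns (φ j)))))
          atTop (𝓝 (⟪p, a⟫ - f a)) :=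
        (hpq.inner hconv).sub ((hcont.tendsto a).comp hconv)
      exact le_of_tendsto_of_tendsto' hL hRt (fun j => hA _ β)
    have ha : a = A p := (hU p).unique hMa (hA p)
    exact ⟨φ, ha ▸ hconv⟩
  -- the conjugate function
  set S : Euc n → ℝ := fun p => ⟪p, A p⟫ - f (A p) with hS
  have hSeq : ∀ q : Euc n, S q = ⟪q, A q⟫ - f (A q) := fun q => rfl
  have hSge : ∀ p x : Euc n, ⟪p, x⟫ - f x ≤ S p := fun p x => hA p x
  have hScont : Continuous S := by
    refine continuous_iff_seqContinuous.mpr fun pk p hpk => ?_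
    exact (hpk.inner (seqA pk p hpk)).sub ((hcont.tendsto _).comp (seqA pk p hpk))
  clear_value S
  -- supporting hyperplane at every point
  have support : ∀ α₀ : Euc n, ∃ p : Euc n, ∀ β, ⟪p, β⟫ - f β ≤ ⟪p, α₀⟫ - f α₀ := by
    intro α₀
    obtain ⟨z, hz, hzmax⟩ := (isCompact_closedBall α₀ 1).exists_isMaxOn
      ⟨α₀, Metric.mem_closedBall_self zero_le_one⟩ hcont.continuousOn
    have hhco : Tendsto (fun p : Euc n => S p - ⟪p, α₀⟫) (cocompact (Euc n)) atTop := by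
      rw [tendsto_atTop]
      intro C
      filter_upwards [tendsto_norm_cocompact_atTop.eventually_ge_atTop (max 1 (C + f z))]
        with p hp
      have hp1 : (1:ℝ) ≤ ‖p‖ := le_trans (le_max_left _ _) hp
      have hp2 : C + f z ≤ ‖p‖ := le_trans (le_max_right _ _) hp
      have hp0 : ‖p‖ ≠ 0 := (lt_of_lt_of_le zero_lt_one hp1).ne'
      have hwball : α₀ + ‖p‖⁻¹ • p ∈ Metric.closedBall α₀ 1 := by
        rw [Metric.mem_closedBall, dist_eq_norm, add_sub_cancel_left, norm_smul, norm_inv,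
          norm_norm, inv_mul_cancel₀ hp0]
      have h1 : ⟪p, α₀ + ‖p‖⁻¹ • p⟫ - f (α₀ + ‖p‖⁻¹ • p) ≤ S p := hSge p _
      have h2 : f (α₀ + ‖p‖⁻¹ • p) ≤ f z := hzmax hwball
      have h3 : ⟪p, α₀ + ‖p‖⁻¹ • p⟫ = ⟪p, α₀⟫ + ‖p‖ := by
        rw [inner_add_right, real_inner_smul_right, real_inner_self_eq_norm_sq]
        field_simp
      linarith
    obtain ⟨p₀, hp₀⟩ :=
      (hScont.sub (continuous_id.inner continuous_const)).exists_forall_le hhco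
    have key : ∀ u : Euc n, ⟪u, α₀⟫ ≤ ⟪u, A p₀⟫ := by
      intro u
      have step : ∀ t : ℝ, 0 < t → ⟪u, α₀⟫ ≤ ⟪u, A (p₀ + t • u)⟫ := by
        intro t ht
        have h1 := hp₀ (p₀ + t • u)
        simp only [id_eq, Pi.sub_apply] at h1
        have h2 : ⟪p₀, A (p₀ + t • u)⟫ - f (A (p₀ + t • u)) ≤ S p₀ := hSge p₀ _
        have e1 : ⟪p₀ + t • u, α₀⟫ = ⟪p₀, α₀⟫ + t * ⟪u, α₀⟫ := by
          rw [inner_add_left, real_inner_smul_left]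
        have e2 : S (p₀ + t • u) = ⟪p₀, A (p₀ + t • u)⟫ + t * ⟪u, A (p₀ + t • u)⟫
            - f (A (p₀ + t • u)) := by
          rw [hSeq, inner_add_left, real_inner_smul_left]
        have hmul : t * ⟪u, α₀⟫ ≤ t * ⟪u, A (p₀ + t • u)⟫ := by linarith
        exact le_of_mul_le_mul_left hmul ht
      have hq : Tendsto (fun k : ℕ => p₀ + (1/(k+1) : ℝ) • u) atTop (𝓝 p₀) := by
        have h0 : Tendsto (fun k : ℕ => (1/(k+1) : ℝ)) atTop (𝓝 0) :=
          tendsto_one_div_add_atTop_nhds_zero_nat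
        simpa using tendsto_const_nhds.add (h0.smul_const u)
      have hlim : Tendsto (fun k : ℕ => ⟪u, A (p₀ + (1/(k+1):ℝ) • u)⟫) atTop
          (𝓝 ⟪u, A p₀⟫) := tendsto_const_nhds.inner (seqA _ _ hq)
      exact ge_of_tendsto' hlim (fun k => step _ (by positivity))
    have hAp : A p₀ = α₀ := by
      have h1 := key (α₀ - A p₀)
      have h2 : ⟪α₀ - A p₀, α₀ - A p₀⟫ ≤ 0 := by
        rw [inner_sub_right]; linarith
      rw [real_inner_self_eq_norm_sq] at h2
      have h3 : ‖α₀ - A p₀‖ = 0 := by nlinarith [norm_nonneg (α₀ - A p₀)]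
      have h4 : α₀ - A p₀ = 0 := norm_eq_zero.mp h3
      have := sub_eq_zero.mp h4
      exact this.symm
    exact ⟨p₀, fun β => by have := hA p₀ β; rwa [hAp] at this⟩
  -- conclude strict convexity
  refine ⟨convex_univ, ?_⟩
  intro x _ y _ hxy a b ha hb hab
  set z := a • x + b • y with hz
  obtain ⟨p, hp⟩ := support z
  have hx := hp x
  have hy := hp y
  have hiv : a * ⟪p, x⟫ + b * ⟪p, y⟫ = ⟪p, z⟫ := by
    rw [hz, inner_add_right, real_inner_smul_right, real_inner_smul_right]
  have hstrict : ⟪p, x⟫ - f x < ⟪p, z⟫ - f z ∨ ⟪p, y⟫ - f y < ⟪p, z⟫ - f z := by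
    by_contra hcon
    push_neg at hcon
    obtain ⟨h1, h2⟩ := hcon
    have ex : ⟪p, x⟫ - f x = ⟪p, z⟫ - f z := le_antisymm hx h1
    have ey : ⟪p, y⟫ - f y = ⟪p, z⟫ - f z := le_antisymm hy h2
    have hMx : ∀ β, ⟪p, β⟫ - f β ≤ ⟪p, x⟫ - f x := fun β => by rw [ex]; exact hp β
    have hMy : ∀ β, ⟪p, β⟫ - f β ≤ ⟪p, y⟫ - f y := fun β => by rw [ey]; exact hp β
    exact hxy ((hU p).unique hMx hMy)
  have hsum : a * (⟪p, z⟫ - f z) + b * (⟪p, z⟫ - f z) = ⟪p, z⟫ - f z := by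
    rw [← add_mul, hab, one_mul]
  rw [smul_eq_mul, smul_eq_mul]
  rcases hstrict with h | h
  · have m1 := mul_lt_mul_of_pos_left h ha
    have m2 := mul_le_mul_of_nonneg_left hy hb.le
    linarith
  · have m1 := mul_le_mul_of_nonneg_left hx ha.le
    have m2 := mul_lt_mul_of_pos_left h hb
    linarith


end Stmt15Aux
/-- for a differentiable, superlinearly coercive `f : ℝⁿ → ℝ`,
strict convexity is equivalent to uniqueness of the maximizer in the Legendre
transform `sup_α (p·α − f(α))` for every `p`. -/
theorem stmt_15
    {n : ℕ} (hn : 1 ≤ n) (f : Euc n → ℝ)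
    (hdiff : Differentiable ℝ f)
    (hcoer : Tendsto (fun α : Euc n => f α / ‖α‖) (cocompact (Euc n)) atTop) :
    StrictConvexOn ℝ univ f ↔
      ∀ p : Euc n, ∃! α : Euc n, ∀ β : Euc n, ⟪p, β⟫ - f β ≤ ⟪p, α⟫ - f α := by
  constructor
  · exact fun hsc => stmt15_forward hdiff.continuous hcoer hsc
  · exact fun hU => stmt15_reverse hdiff.continuous hcoer hU
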